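/- In the Golay layer construction with initial GCP a = b = (1), the sequence c of length 2^m defined by c_x = p_o(x) · exp(f_r(x) + i f_i(x)), where f_r(x) = α(e_m x_{π(m)} + Σ_{n=1}^{m-1} e_n ((x_{π(n)} + x_{π(n+1)}) mod 2) + e_0), f_i(x) = π Σ_{n=1}^{m-1} x_{π(n)} x_{π(n+1)} + β(Σ_{n=1}^m k_n x_{π(n)} + k_0), is a complementary sequence: sup over the unit circle of |p_c(z)|² ≤ 2 Σ_x |c_x|². -/

import Mathlib

/-- The bit `x_j` of a binary tuple, as an integer. -/
def bitZ {M : ℕ} (x : Fin M → Bool) (j : Fin M) : ℤ := if x j then 1 else 0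

/-- The bit `x_j` of a binary tuple, as a real number. -/
def bitR {M : ℕ} (x : Fin M → Bool) (j : Fin M) : ℝ := if x j then 1 else 0

/-- Amplitude function `f_r` of the Golay layer. -/
noncomputable def fR (m : ℕ) (σ : Equiv.Perm (Fin (m + 1))) (α e0 : ℝ)
    (e : Fin (m + 1) → ℝ) (x : Fin (m + 1) → Bool) : ℝ :=
  α * (e (Fin.last m) * bitR x (σ (Fin.last m)) +
    (∑ i : Fin m, e i.castSucc *
      (((bitZ x (σ i.castSucc) + bitZ x (σ i.succ)) % 2 : ℤ) : ℝ)) + e0)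

/-- Phase function `f_i` of the Golay layer. -/
noncomputable def fI (m : ℕ) (σ : Equiv.Perm (Fin (m + 1))) (β k0 : ℝ)
    (k : Fin (m + 1) → ℝ) (x : Fin (m + 1) → Bool) : ℝ :=
  Real.pi * (∑ i : Fin m, bitR x (σ i.castSucc) * bitR x (σ i.succ)) +
    β * ((∑ n : Fin (m + 1), k n * bitR x (σ n)) + k0)

/-- The Golay-layer sequence element `c_x = exp(f_r(x) + i f_i(x))`
(with initial GCP `a = b = (1)`, so `p_o(x) = 1`). -/
noncomputable def golayC (m : ℕ) (σ : Equiv.Perm (Fin (m + 1))) (α β e0 k0 : ℝ)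
    (e k : Fin (m + 1) → ℝ) (x : Fin (m + 1) → Bool) : ℂ :=
  Complex.exp ((fR m σ α e0 e x : ℝ) + Complex.I * (fI m σ β k0 k x : ℝ))


/-! ### Auxiliary machinery for the proof -/

noncomputable def Wgol (m : ℕ) (r : Fin m → ℝ) (v : Fin (m + 1) → ℂ)
    (y : Fin (m + 1) → Bool) : ℂ :=
  (∏ n : Fin m, (if y n.castSucc ≠ y n.succ then (r n : ℂ) else 1) *
      (if y n.castSucc && y n.succ then -1 else 1)) *
  ∏ n : Fin (m + 1), (if y n then v n else 1)

lemma par1 (X Y v : ℂ) (hv : ‖v‖ = 1) :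
    ‖X + v * Y‖ ^ 2 + ‖X - v * Y‖ ^ 2 =
      2 * (‖X‖ ^ 2 + ‖Y‖ ^ 2) := by
  have h : v.re * v.re + v.im * v.im = 1 := by
    have := congrArg (· ^ 2) hv
    simpa [Complex.sq_norm, Complex.normSq_apply] using this
  simp only [Complex.sq_norm, Complex.normSq_apply, Complex.add_re, Complex.add_im,
    Complex.sub_re, Complex.sub_im, Complex.mul_re, Complex.mul_im]
  linear_combination (2 * (Y.re * Y.re + Y.im * Y.im)) * h

lemma par2 (A B : ℂ) (r : ℝ) :
    ‖A + (r : ℂ) * B‖ ^ 2 + ‖(r : ℂ) * A - B‖ ^ 2 =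
      (1 + r ^ 2) * (‖A‖ ^ 2 + ‖B‖ ^ 2) := by
  simp only [Complex.sq_norm, Complex.normSq_apply, Complex.add_re, Complex.add_im,
    Complex.sub_re, Complex.sub_im, Complex.mul_re, Complex.mul_im,
    Complex.ofReal_re, Complex.ofReal_im]
  ring

lemma sum_pi_bool_succ {γ : Type*} [AddCommMonoid γ] {M : ℕ}
    (F : (Fin (M + 1) → Bool) → γ) :
    ∑ y : Fin (M + 1) → Bool, F y =
      ∑ b : Bool, ∑ y' : Fin M → Bool, F (Fin.cons b y') := by
  calc ∑ y : Fin (M + 1) → Bool, F y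
      = ∑ p : Bool × (Fin M → Bool), F (Fin.cons p.1 p.2) :=
        (Fintype.sum_equiv (Fin.consEquiv fun _ => Bool) _ _ fun p => rfl).symm
    _ = ∑ b : Bool, ∑ y' : Fin M → Bool, F (Fin.cons b y') := Fintype.sum_prod_type _

lemma Wgol_cons (m : ℕ) (r : Fin (m + 1) → ℝ) (v : Fin (m + 2) → ℂ)
    (b : Bool) (y' : Fin (m + 1) → Bool) :
    Wgol (m + 1) r v (Fin.cons b y') =
      ((if b ≠ y' 0 then ((r 0 : ℝ) : ℂ) else 1) * (if b && y' 0 then -1 else 1) *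
        (if b then v 0 else 1)) *
      Wgol m (fun n => r n.succ) (fun n => v n.succ) y' := by
  unfold Wgol
  rw [Fin.prod_univ_succ, Fin.prod_univ_succ]
  have h2 : ∀ n : Fin m, (Fin.cons b y' : Fin (m + 2) → Bool) (n.succ).castSucc
      = y' n.castSucc := by
    intro n
    rw [← Fin.succ_castSucc]
    simp
  simp only [Fin.castSucc_zero, Fin.cons_zero, Fin.cons_succ, h2]
  ring

lemma golay_key (m : ℕ) (r : Fin m → ℝ) (v : Fin (m + 1) → ℂ)
    (hv : ∀ n : Fin m, ‖v n.castSucc‖ = 1) :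
    ‖∑ y : Fin (m + 1) → Bool, Wgol m r v y‖ ^ 2 +
      ‖∑ y : Fin (m + 1) → Bool,
        (if y 0 then (-1 : ℂ) else 1) * Wgol m r v y‖ ^ 2 =
    2 * ∑ y : Fin (m + 1) → Bool, ‖Wgol m r v y‖ ^ 2 := by
  induction m with
  | zero =>
    rw [sum_pi_bool_succ (fun y => Wgol 0 r v y),
      sum_pi_bool_succ (fun y => (if y 0 then (-1 : ℂ) else 1) * Wgol 0 r v y),
      sum_pi_bool_succ (fun y => ‖Wgol 0 r v y‖ ^ 2)]
    simp only [Fintype.sum_bool, Fintype.sum_unique]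
    have hW : ∀ b : Bool, Wgol 0 r v (Fin.cons b default) = if b then v 0 else 1 := by
      intro b; unfold Wgol; simp
    simp only [hW, Fin.cons_zero]
    norm_num
    simp only [Complex.sq_norm, Complex.normSq_apply, Complex.add_re, Complex.add_im,
      Complex.mul_re, Complex.mul_im, Complex.one_re, Complex.one_im,
      Complex.neg_re, Complex.neg_im, Complex.sub_re, Complex.sub_im]
    ring
  | succ M ih =>
    set r' : Fin M → ℝ := fun n => r n.succ with hr'
    set v' : Fin (M + 1) → ℂ := fun n => v n.succ with hv'def
    have hv' : ∀ n : Fin M, ‖v' n.castSucc‖ = 1 := by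
      intro n
      have : (n.castSucc).succ = (n.succ).castSucc := Fin.succ_castSucc n
      show ‖v (n.castSucc).succ‖ = 1
      rw [this]; exact hv n.succ
    set A : ℂ := ∑ y' : Fin (M + 1) → Bool,
      (if y' 0 then 0 else Wgol M r' v' y') with hA
    set B : ℂ := ∑ y' : Fin (M + 1) → Bool,
      (if y' 0 then Wgol M r' v' y' else 0) with hB
    have hv0 : ‖v 0‖ = 1 := by
      have := hv 0
      simpa using this
    have hsum : ∀ c d : ℂ, (A + c * B) + d * (c * A - B) =
        ∑ y' : Fin (M + 1) → Bool,
          ((if y' 0 then 0 else Wgol M r' v' y') +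
            c * (if y' 0 then Wgol M r' v' y' else 0) +
            d * (c * (if y' 0 then 0 else Wgol M r' v' y') -
              (if y' 0 then Wgol M r' v' y' else 0))) := by
      intro c d
      simp only [hA, hB, Finset.mul_sum, ← Finset.sum_sub_distrib, ← Finset.sum_add_distrib]
    have hP : ∑ y : Fin (M + 2) → Bool, Wgol (M + 1) r v y
        = (A + (r 0 : ℂ) * B) + v 0 * ((r 0 : ℂ) * A - B) := by
      rw [sum_pi_bool_succ, Fintype.sum_bool, ← Finset.sum_add_distrib,
        hsum ((r 0 : ℝ) : ℂ) (v 0)]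
      refine Finset.sum_congr rfl fun y' _ => ?_
      rw [Wgol_cons, Wgol_cons, ← hr', ← hv'def]
      cases h : y' 0 <;> simp [h] <;> ring
    have hQ : ∑ y : Fin (M + 2) → Bool, (if y 0 then (-1 : ℂ) else 1) * Wgol (M + 1) r v y
        = (A + (r 0 : ℂ) * B) + (-(v 0)) * ((r 0 : ℂ) * A - B) := by
      rw [sum_pi_bool_succ, Fintype.sum_bool, ← Finset.sum_add_distrib,
        hsum ((r 0 : ℝ) : ℂ) (-(v 0))]
      refine Finset.sum_congr rfl fun y' _ => ?_
      rw [Wgol_cons, Wgol_cons, ← hr', ← hv'def]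
      cases h : y' 0 <;> simp [h, Fin.cons_zero] <;> ring
    have hE : ∑ y : Fin (M + 2) → Bool, ‖Wgol (M + 1) r v y‖ ^ 2
        = (1 + (r 0) ^ 2) * ∑ y' : Fin (M + 1) → Bool, ‖Wgol M r' v' y'‖ ^ 2 := by
      rw [sum_pi_bool_succ, Fintype.sum_bool, ← Finset.sum_add_distrib, Finset.mul_sum]
      refine Finset.sum_congr rfl fun y' _ => ?_
      rw [Wgol_cons, Wgol_cons, ← hr', ← hv'def]
      cases h : y' 0 <;>
        simp [h, norm_mul, mul_pow, Complex.norm_real, sq_abs, hv0] <;> ring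
    have hP' : ∑ y' : Fin (M + 1) → Bool, Wgol M r' v' y' = A + B := by
      rw [hA, hB, ← Finset.sum_add_distrib]
      refine Finset.sum_congr rfl fun y' _ => ?_
      cases h : y' 0 <;> simp [h]
    have hQ' : ∑ y' : Fin (M + 1) → Bool, (if y' 0 then (-1 : ℂ) else 1) * Wgol M r' v' y'
        = A - B := by
      rw [hA, hB, ← Finset.sum_sub_distrib]
      refine Finset.sum_congr rfl fun y' _ => ?_
      cases h : y' 0 <;> simp [h]
    have ih' := ih r' v' hv'
    rw [hP', hQ'] at ih'
    have h1 := par1 (A + (r 0 : ℂ) * B) ((r 0 : ℂ) * A - B) (v 0) hv0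
    have h2 := par2 A B (r 0)
    have h3 := par1 A B 1 (by simp)
    rw [one_mul] at h3
    rw [hP, hQ, hE]
    have hsub : (A + (r 0 : ℂ) * B) + (-(v 0)) * ((r 0 : ℂ) * A - B)
        = (A + (r 0 : ℂ) * B) - v 0 * ((r 0 : ℂ) * A - B) := by ring
    rw [hsub, h1, h2]
    nlinarith [ih', h3]

section Decomp

variable (m : ℕ) (σ : Equiv.Perm (Fin (m + 1))) (α β e0 k0 : ℝ)
  (e k : Fin (m + 1) → ℝ) (z : ℂ)

/-- Split of the exponent of `golayC · z^N` into per-index pieces. -/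
lemma exp_split (x : Fin (m + 1) → Bool) :
    ((fR m σ α e0 e x : ℝ) : ℂ) + Complex.I * ((fI m σ β k0 k x : ℝ) : ℂ) =
      (((α * e0 : ℝ) : ℂ) + Complex.I * ((β * k0 : ℝ) : ℂ)) +
      (∑ i : Fin m,
        (((α * (e i.castSucc *
            (((bitZ x (σ i.castSucc) + bitZ x (σ i.succ)) % 2 : ℤ) : ℝ)) : ℝ) : ℂ) +
          Complex.I * ((Real.pi * (bitR x (σ i.castSucc) * bitR x (σ i.succ)) : ℝ) : ℂ))) +
      (∑ n : Fin (m + 1),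
        ((if n = Fin.last m then ((α * (e (Fin.last m) * bitR x (σ n)) : ℝ) : ℂ) else 0) +
          Complex.I * ((β * (k n * bitR x (σ n)) : ℝ) : ℂ))) := by
  have hlast : ∑ n : Fin (m + 1),
      (if n = Fin.last m then ((α * (e (Fin.last m) * bitR x (σ n)) : ℝ) : ℂ) else 0)
      = ((α * (e (Fin.last m) * bitR x (σ (Fin.last m))) : ℝ) : ℂ) := by
    rw [Finset.sum_ite_eq' Finset.univ (Fin.last m)
      (fun n => ((α * (e (Fin.last m) * bitR x (σ n)) : ℝ) : ℂ))]
    simp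
  rw [Finset.sum_add_distrib, Finset.sum_add_distrib, hlast]
  unfold fR fI
  push_cast
  rw [← Finset.mul_sum, ← Finset.mul_sum, ← Finset.mul_sum, ← Finset.mul_sum,
    ← Finset.mul_sum]
  push_cast
  ring

end Decomp

section Decomp2

variable (m : ℕ) (σ : Equiv.Perm (Fin (m + 1))) (α β e0 k0 : ℝ)
  (e k : Fin (m + 1) → ℝ) (z : ℂ)

/-- Amplitude factors of the Golay layer. -/
noncomputable def rGol : Fin m → ℝ := fun n => Real.exp (α * e n.castSucc)

/-- Per-bit factors of the Golay layer. -/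
noncomputable def vGol : Fin (m + 1) → ℂ := fun n =>
  z ^ ((2 : ℕ) ^ (m - (σ n).val)) *
    Complex.exp ((if n = Fin.last m then ((α * e (Fin.last m) : ℝ) : ℂ) else 0) +
      Complex.I * ((β * k n : ℝ) : ℂ))

/-- Overall constant of the Golay layer. -/
noncomputable def Cgol : ℂ :=
  Complex.exp (((α * e0 : ℝ) : ℂ) + Complex.I * ((β * k0 : ℝ) : ℂ))

lemma fac1 (x : Fin (m + 1) → Bool) (i : Fin m) :
    Complex.exp (((α * (e i.castSucc *
          (((bitZ x (σ i.castSucc) + bitZ x (σ i.succ)) % 2 : ℤ) : ℝ)) : ℝ) : ℂ) +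
        Complex.I * ((Real.pi * (bitR x (σ i.castSucc) * bitR x (σ i.succ)) : ℝ) : ℂ)) =
      (if x (σ i.castSucc) ≠ x (σ i.succ) then ((rGol m α e i : ℝ) : ℂ) else 1) *
        (if x (σ i.castSucc) && x (σ i.succ) then -1 else 1) := by
  unfold rGol
  cases h1 : x (σ i.castSucc) <;> cases h2 : x (σ i.succ)
  · simp [bitZ, bitR, h1, h2]
  · simp only [bitZ, bitR, h1, h2, if_true, if_false]
    norm_num [Complex.ofReal_exp]
  · simp only [bitZ, bitR, h1, h2, if_true, if_false]
    norm_num [Complex.ofReal_exp]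
  · simp only [bitZ, bitR, h1, h2, if_true, if_false]
    norm_num
    rw [mul_comm Complex.I]
    exact Complex.exp_pi_mul_I

lemma fac2 (x : Fin (m + 1) → Bool) (n : Fin (m + 1)) :
    Complex.exp ((if n = Fin.last m then ((α * (e (Fin.last m) * bitR x (σ n)) : ℝ) : ℂ)
          else 0) + Complex.I * ((β * (k n * bitR x (σ n)) : ℝ) : ℂ)) *
        (if x (σ n) then z ^ ((2 : ℕ) ^ (m - (σ n).val)) else 1) =
      (if x (σ n) then vGol m σ α β e k z n else 1) := by
  unfold vGol
  cases h : x (σ n)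
  · simp [bitR, h]
  · simp only [bitR, h, if_true, if_false]
    norm_num
    ring

lemma golay_decomp (x : Fin (m + 1) → Bool) :
    golayC m σ α β e0 k0 e k x *
        z ^ (∑ j : Fin (m + 1), (if x j then 1 else 0) * 2 ^ (m - j.val)) =
      Cgol α β e0 k0 *
        Wgol m (rGol m α e) (vGol m σ α β e k z) (fun n => x (σ n)) := by
  have hz : z ^ (∑ j : Fin (m + 1), (if x j then 1 else 0) * 2 ^ (m - j.val)) =
      ∏ n : Fin (m + 1), (if x (σ n) then z ^ ((2 : ℕ) ^ (m - (σ n).val)) else 1) := by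
    rw [← Finset.prod_pow_eq_pow_sum,
      ← Equiv.prod_comp σ (fun j => z ^ ((if x j then 1 else 0) * 2 ^ (m - j.val)))]
    refine Finset.prod_congr rfl fun n _ => ?_
    cases h : x (σ n) <;> simp [h]
  have h1 : (∏ i : Fin m, Complex.exp (((α * (e i.castSucc *
          (((bitZ x (σ i.castSucc) + bitZ x (σ i.succ)) % 2 : ℤ) : ℝ)) : ℝ) : ℂ) +
        Complex.I * ((Real.pi * (bitR x (σ i.castSucc) * bitR x (σ i.succ)) : ℝ) : ℂ))) =
      ∏ i : Fin m, ((if x (σ i.castSucc) ≠ x (σ i.succ) then ((rGol m α e i : ℝ) : ℂ) else 1) *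
        (if x (σ i.castSucc) && x (σ i.succ) then -1 else 1)) :=
    Finset.prod_congr rfl fun i _ => fac1 m σ α e x i
  have h2 : (∏ n : Fin (m + 1), Complex.exp ((if n = Fin.last m then
          ((α * (e (Fin.last m) * bitR x (σ n)) : ℝ) : ℂ) else 0) +
        Complex.I * ((β * (k n * bitR x (σ n)) : ℝ) : ℂ))) *
      (∏ n : Fin (m + 1), (if x (σ n) then z ^ ((2 : ℕ) ^ (m - (σ n).val)) else 1)) =
      ∏ n : Fin (m + 1), (if x (σ n) then vGol m σ α β e k z n else 1) := by
    rw [← Finset.prod_mul_distrib]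
    exact Finset.prod_congr rfl fun n _ => fac2 m σ α β e k z x n
  unfold golayC
  rw [exp_split m σ α β e0 k0 e k x, Complex.exp_add, Complex.exp_add,
    Complex.exp_sum, Complex.exp_sum, hz]
  unfold Wgol Cgol
  rw [mul_assoc, h2, h1]
  ring

end Decomp2


/-- The Golay layer produces a complementary sequence: its peak power on the
unit circle is at most twice its energy (PAPR ≤ 2, i.e. 3 dB). -/
theorem stmt9 (m : ℕ) (σ : Equiv.Perm (Fin (m + 1))) (α β : ℝ)
    (hα : 0 ≤ α) (hβ : 0 ≤ β) (e0 k0 : ℝ) (e k : Fin (m + 1) → ℝ) :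
    ∀ z : ℂ, ‖z‖ = 1 →
      ‖∑ x : Fin (m + 1) → Bool,
          golayC m σ α β e0 k0 e k x *
            z ^ (∑ j : Fin (m + 1), (if x j then 1 else 0) * 2 ^ (m - j.val))‖ ^ 2
        ≤ 2 * ∑ x : Fin (m + 1) → Bool,
            ‖golayC m σ α β e0 k0 e k x‖ ^ 2 := by
  intro z hz
  set r := rGol m α e with hrdef
  set v := vGol m σ α β e k z with hvdef
  set C := Cgol α β e0 k0 with hCdef
  have hv : ∀ n : Fin m, ‖v n.castSucc‖ = 1 := by
    intro n
    have hne : (n.castSucc : Fin (m + 1)) ≠ Fin.last m := ne_of_lt (Fin.castSucc_lt_last n)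
    simp [hvdef, vGol, hne, norm_mul, norm_pow, hz, Complex.norm_exp]
  have hd : ∀ x : Fin (m + 1) → Bool,
      golayC m σ α β e0 k0 e k x *
          z ^ (∑ j : Fin (m + 1), (if x j then 1 else 0) * 2 ^ (m - j.val)) =
        C * Wgol m r v (fun n => x (σ n)) := fun x => golay_decomp m σ α β e0 k0 e k z x
  have habs : ∀ x : Fin (m + 1) → Bool,
      ‖golayC m σ α β e0 k0 e k x‖ =
        ‖C * Wgol m r v (fun n => x (σ n))‖ := by
    intro x
    have h1 : ‖z ^ (∑ j : Fin (m + 1),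
        (if x j then 1 else 0) * 2 ^ (m - j.val))‖ = 1 := by
      rw [norm_pow, hz, one_pow]
    rw [← hd x, norm_mul, h1, mul_one]
  have reidx : ∑ x : Fin (m + 1) → Bool, Wgol m r v (fun n => x (σ n))
      = ∑ y : Fin (m + 1) → Bool, Wgol m r v y :=
    Fintype.sum_equiv (Equiv.arrowCongr σ.symm (Equiv.refl Bool)) _ _ fun x => rfl
  have reidx2 : ∑ x : Fin (m + 1) → Bool,
        ‖C * Wgol m r v (fun n => x (σ n))‖ ^ 2
      = ∑ y : Fin (m + 1) → Bool, ‖C * Wgol m r v y‖ ^ 2 :=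
    Fintype.sum_equiv (Equiv.arrowCongr σ.symm (Equiv.refl Bool)) _ _ fun x => rfl
  have hsum1 : (∑ x : Fin (m + 1) → Bool, golayC m σ α β e0 k0 e k x *
        z ^ (∑ j : Fin (m + 1), (if x j then 1 else 0) * 2 ^ (m - j.val)))
      = C * ∑ y : Fin (m + 1) → Bool, Wgol m r v y := by
    rw [Finset.sum_congr rfl fun x _ => hd x, ← Finset.mul_sum, reidx]
  have hR : ∑ x : Fin (m + 1) → Bool, ‖golayC m σ α β e0 k0 e k x‖ ^ 2
      = ∑ y : Fin (m + 1) → Bool, ‖C * Wgol m r v y‖ ^ 2 := by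
    rw [Finset.sum_congr rfl fun x _ => by rw [habs x], reidx2]
  rw [hsum1, hR]
  have key := golay_key m r v hv
  calc ‖C * ∑ y : Fin (m + 1) → Bool, Wgol m r v y‖ ^ 2
      = ‖C‖ ^ 2 *
          ‖∑ y : Fin (m + 1) → Bool, Wgol m r v y‖ ^ 2 := by
        rw [norm_mul, mul_pow]
    _ ≤ ‖C‖ ^ 2 *
          (‖∑ y : Fin (m + 1) → Bool, Wgol m r v y‖ ^ 2 +
            ‖∑ y : Fin (m + 1) → Bool,
              (if y 0 then (-1 : ℂ) else 1) * Wgol m r v y‖ ^ 2) :=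
        mul_le_mul_of_nonneg_left (le_add_of_nonneg_right (sq_nonneg _)) (sq_nonneg _)
    _ = ‖C‖ ^ 2 *
          (2 * ∑ y : Fin (m + 1) → Bool, ‖Wgol m r v y‖ ^ 2) := by rw [key]
    _ = 2 * ∑ y : Fin (m + 1) → Bool, ‖C * Wgol m r v y‖ ^ 2 := by
        simp only [norm_mul, mul_pow, ← Finset.mul_sum]
        ring
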